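/- For the simple walk, define for each k ≥ 1 the formal power series R_k ∈ ℝ[[x,y]] by R_k = −8·((1−x)²(1−y)²)⁻¹ · Σ_{l=0}^{k−1} ω(x)^{k−1−l}·(−ω(y))^{l}, where ω(t) = −2t·(1−t)⁻² ∈ ℝ[[t]]; equivalently K(x,y)·R_k = ω(x)^k − (−ω(y))^k, where K(x,y) = (x + y + x²y + xy² − 4xy)/4 is the kernel of the simple walk. Let h_k : ℤ² → ℝ be given by h_k(i,j) = (coefficient of x^i y^j in R_k) for i,j ≥ 0 and 0 otherwise. Then: (1) each h_k is discrete harmonic for the simple walk; (2) for each fixed (i,j), h_k(i,j) = 0 for all k > i + j + 1; and (3) every discrete harmonic function h for the simple walk (with Dirichlet boundary conditions) can be written as h(i,j) = Σ_{k≥1} a_k h_k(i,j) for all (i,j), for a uniquely determined real sequence (a_k)_{k≥1}. -/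

import Mathlib

/-- The discrete Laplacian of the simple walk (steps `(±1,0)`, `(0,±1)`, weight `1/4` each),
defined to be `0` outside the quarter plane. -/
noncomputable def swLap (h : ℤ → ℤ → ℝ) : ℤ → ℤ → ℝ :=
  fun i j =>
    if 0 ≤ i ∧ 0 ≤ j then
      (h (i + 1) j + h (i - 1) j + h i (j + 1) + h i (j - 1)) / 4 - h i j
    else 0

/-- The variable `x` in `ℝ[[x,y]]`. -/
noncomputable def Xps : MvPowerSeries (Fin 2) ℝ := MvPowerSeries.X 0

/-- The variable `y` in `ℝ[[x,y]]`. -/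
noncomputable def Yps : MvPowerSeries (Fin 2) ℝ := MvPowerSeries.X 1

/-- `ω(x) = −2x·(1−x)⁻²` as a power series in `x`. -/
noncomputable def omegaX : MvPowerSeries (Fin 2) ℝ :=
  (MvPowerSeries.C (σ := Fin 2) (R := ℝ)) (-2) * Xps * ((1 - Xps) ^ 2)⁻¹

/-- `ω(y) = −2y·(1−y)⁻²` as a power series in `y`. -/
noncomputable def omegaY : MvPowerSeries (Fin 2) ℝ :=
  (MvPowerSeries.C (σ := Fin 2) (R := ℝ)) (-2) * Yps * ((1 - Yps) ^ 2)⁻¹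

/-- The kernel of the simple walk, `K(x,y) = (x + y + x²y + xy² − 4xy)/4`. -/
noncomputable def swKernel : MvPowerSeries (Fin 2) ℝ :=
  (MvPowerSeries.C (σ := Fin 2) (R := ℝ)) (1 / 4) *
    (Xps + Yps + Xps ^ 2 * Yps + Xps * Yps ^ 2 - 4 * (Xps * Yps))

/-- `R_k = −8·((1−x)²(1−y)²)⁻¹ · Σ_{l=0}^{k−1} ω(x)^{k−1−l}·(−ω(y))^l ∈ ℝ[[x,y]]`. -/
noncomputable def Rser (k : ℕ) : MvPowerSeries (Fin 2) ℝ :=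
  (MvPowerSeries.C (σ := Fin 2) (R := ℝ)) (-8) * ((1 - Xps) ^ 2 * (1 - Yps) ^ 2)⁻¹ *
    ∑ l ∈ Finset.range k, omegaX ^ (k - 1 - l) * (-omegaY) ^ l

/-- `h_k(i,j)` is the coefficient of `x^i y^j` in `R_k` for `i, j ≥ 0`, and `0` otherwise. -/
noncomputable def hser (k : ℕ) : ℤ → ℤ → ℝ :=
  fun i j =>
    if 0 ≤ i ∧ 0 ≤ j then
      (MvPowerSeries.coeff (R := ℝ)
        (Finsupp.single (0 : Fin 2) i.toNat + Finsupp.single (1 : Fin 2) j.toNat)) (Rser k)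
    else 0



open MvPowerSeries Finsupp

/-- multidegree -/
noncomputable def Mm (i j : ℕ) : Fin 2 →₀ ℕ := Finsupp.single 0 i + Finsupp.single 1 j

lemma Mm_apply0 (i j : ℕ) : Mm i j 0 = i := by
  simp [Mm, Finsupp.single_apply]

lemma Mm_apply1 (i j : ℕ) : Mm i j 1 = j := by
  simp [Mm, Finsupp.single_apply]

lemma Mm_add (a b i j : ℕ) : Mm (a+i) (b+j) = Mm a b + Mm i j := by
  simp only [Mm, Finsupp.single_add]; abel

lemma XY_pow (a b : ℕ) : Xps^a * Yps^b = MvPowerSeries.monomial (R := ℝ) (Mm a b) 1 := by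
  rw [Xps, Yps, X_pow_eq, X_pow_eq, monomial_mul_monomial, one_mul, Mm]

lemma coeff_shift (a b i j : ℕ) (f : MvPowerSeries (Fin 2) ℝ) :
    MvPowerSeries.coeff (R := ℝ) (Mm (a+i) (b+j)) (Xps^a * Yps^b * f) =
      MvPowerSeries.coeff (R := ℝ) (Mm i j) f := by
  rw [XY_pow, Mm_add, coeff_add_monomial_mul, one_mul]

lemma coeff_shift_zero {a b i j : ℕ} (h : ¬(a ≤ i ∧ b ≤ j)) (f : MvPowerSeries (Fin 2) ℝ) :
    MvPowerSeries.coeff (R := ℝ) (Mm i j) (Xps^a * Yps^b * f) = 0 := by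
  rw [XY_pow, coeff_monomial_mul, if_neg]
  intro hle
  exact h ⟨by simpa [Mm_apply0] using hle 0, by simpa [Mm_apply1] using hle 1⟩

/-- `f` does not involve variable `t`. -/
def noVar (t : Fin 2) (f : MvPowerSeries (Fin 2) ℝ) : Prop :=
  ∀ m : Fin 2 →₀ ℕ, m t ≠ 0 → MvPowerSeries.coeff (R := ℝ) m f = 0

lemma noVar.add {t f g} (hf : noVar t f) (hg : noVar t g) : noVar t (f + g) := by
  intro m hm; rw [map_add, hf m hm, hg m hm, add_zero]

lemma noVar.neg {t f} (hf : noVar t f) : noVar t (-f) := by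
  intro m hm; rw [map_neg, hf m hm, neg_zero]

lemma noVar.sub {t f g} (hf : noVar t f) (hg : noVar t g) : noVar t (f - g) := by
  intro m hm; rw [map_sub, hf m hm, hg m hm, sub_zero]

lemma noVar.C (t : Fin 2) (a : ℝ) : noVar t (MvPowerSeries.C (σ := Fin 2) (R := ℝ) a) := by
  intro m hm
  rw [coeff_C, if_neg]
  rintro rfl; simp at hm

lemma noVar.one (t : Fin 2) : noVar t (1 : MvPowerSeries (Fin 2) ℝ) := by
  simpa using noVar.C t 1

lemma noVar.X {t s : Fin 2} (h : s ≠ t) : noVar t (MvPowerSeries.X s) := by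
  intro m hm
  rw [coeff_X, if_neg]
  rintro rfl
  rw [Finsupp.single_apply, if_neg h] at hm; exact hm rfl

lemma noVar.mul {t f g} (hf : noVar t f) (hg : noVar t g) : noVar t (f * g) := by
  intro m hm
  rw [coeff_mul]
  apply Finset.sum_eq_zero
  rintro ⟨p, q⟩ hpq
  rw [Finset.HasAntidiagonal.mem_antidiagonal] at hpq
  have : p t + q t = m t := by rw [← Finsupp.add_apply, hpq]
  rcases Nat.eq_zero_or_pos (p t) with hp | hp
  · have : q t ≠ 0 := by omega
    rw [hg q this, mul_zero]
  · rw [hf p (by omega), zero_mul]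

lemma noVar.pow {t f} (hf : noVar t f) (n : ℕ) : noVar t (f ^ n) := by
  induction n with
  | zero => simpa using noVar.one t
  | succ n ih => rw [pow_succ]; exact ih.mul hf

lemma noVar.inv {t f} (hf : noVar t f) : noVar t f⁻¹ := by
  intro m hm
  induction m using WellFoundedLT.induction with
  | _ m ih =>
  rw [MvPowerSeries.coeff_inv, if_neg (by rintro rfl; simp at hm)]
  rw [Finset.sum_eq_zero, mul_zero]
  rintro ⟨p, q⟩ hpq
  rw [Finset.HasAntidiagonal.mem_antidiagonal] at hpq
  have hsum : p t + q t = m t := by rw [← Finsupp.add_apply, hpq]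
  split_ifs with hq
  · rcases Nat.eq_zero_or_pos (q t) with h0 | h0
    · rw [hf p (by omega), zero_mul]
    · rw [ih q hq (by omega), mul_zero]
  · rfl




noncomputable def Aps : MvPowerSeries (Fin 2) ℝ := (1 - Xps) ^ 2
noncomputable def Bps : MvPowerSeries (Fin 2) ℝ := (1 - Yps) ^ 2

lemma constCoeff_A : MvPowerSeries.constantCoeff (σ := Fin 2) (R := ℝ) Aps = 1 := by
  simp [Aps, Xps]

lemma constCoeff_B : MvPowerSeries.constantCoeff (σ := Fin 2) (R := ℝ) Bps = 1 := by
  simp [Bps, Yps]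

lemma hAA : Aps * Aps⁻¹ = 1 :=
  MvPowerSeries.mul_inv_cancel _ (by rw [constCoeff_A]; norm_num)

lemma hBB : Bps * Bps⁻¹ = 1 :=
  MvPowerSeries.mul_inv_cancel _ (by rw [constCoeff_B]; norm_num)

lemma hABU : (Aps * Bps) * (Aps * Bps)⁻¹ = 1 :=
  MvPowerSeries.mul_inv_cancel _ (by rw [map_mul, constCoeff_A, constCoeff_B]; norm_num)

lemma kernel_eq : swKernel * ((MvPowerSeries.C (σ := Fin 2) (R := ℝ)) (-8)) =
    (MvPowerSeries.C (σ := Fin 2) (R := ℝ)) (-2) * (Xps * Bps + Yps * Aps) := by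
  have hc : (MvPowerSeries.C (σ := Fin 2) (R := ℝ)) (1/4) * (MvPowerSeries.C (σ := Fin 2) (R := ℝ)) (-8)
      = (MvPowerSeries.C (σ := Fin 2) (R := ℝ)) (-2) := by
    rw [← map_mul]; norm_num
  unfold swKernel Aps Bps
  linear_combination (Xps + Yps + Xps ^ 2 * Yps + Xps * Yps ^ 2 - 4 * (Xps * Yps)) * hc

lemma omega_sum_eq : omegaX + omegaY =
    swKernel * ((MvPowerSeries.C (σ := Fin 2) (R := ℝ)) (-8) * (Aps * Bps)⁻¹) := by
  have hrev : (Aps * Bps)⁻¹ = Bps⁻¹ * Aps⁻¹ := MvPowerSeries.mul_inv_rev _ _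
  have hk := kernel_eq
  unfold omegaX omegaY
  rw [hrev]
  show (MvPowerSeries.C (σ := Fin 2) (R := ℝ)) (-2) * Xps * Aps⁻¹ +
      (MvPowerSeries.C (σ := Fin 2) (R := ℝ)) (-2) * Yps * Bps⁻¹ = _
  linear_combination (-(Bps⁻¹ * Aps⁻¹)) * hk +
    (-((MvPowerSeries.C (σ := Fin 2) (R := ℝ)) (-2) * Xps * Aps⁻¹)) * hBB +
    (-((MvPowerSeries.C (σ := Fin 2) (R := ℝ)) (-2) * Yps * Bps⁻¹)) * hAA

lemma part0 (k : ℕ) (hk : 1 ≤ k) : swKernel * Rser k = omegaX ^ k - (-omegaY) ^ k := by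
  have hs : (∑ l ∈ Finset.range k, omegaX ^ (k - 1 - l) * (-omegaY) ^ l) *
      ((-omegaY) - omegaX) = (-omegaY) ^ k - omegaX ^ k := by
    have := geom_sum₂_mul (-omegaY) omegaX k
    rw [← this]
    congr 1
    apply Finset.sum_congr rfl
    intro l _; ring
  have : swKernel * Rser k =
      (omegaX + omegaY) * ∑ l ∈ Finset.range k, omegaX ^ (k - 1 - l) * (-omegaY) ^ l := by
    rw [omega_sum_eq, Rser]
    show _ = _
    unfold Aps Bps
    ring
  rw [this]
  linear_combination -hs

noncomputable def wx : MvPowerSeries (Fin 2) ℝ := (MvPowerSeries.C (σ := Fin 2) (R := ℝ)) (-2) * Aps⁻¹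
noncomputable def wy : MvPowerSeries (Fin 2) ℝ := (MvPowerSeries.C (σ := Fin 2) (R := ℝ)) 2 * Bps⁻¹

lemma omegaX_eq : omegaX = Xps * wx := by unfold omegaX wx Aps; ring

lemma neg_omegaY_eq : -omegaY = Yps * wy := by
  unfold omegaY wy Bps
  rw [show ((MvPowerSeries.C (σ := Fin 2) (R := ℝ)) (-2) : MvPowerSeries (Fin 2) ℝ)
      = -(MvPowerSeries.C (σ := Fin 2) (R := ℝ)) 2 by rw [← map_neg]]
  ring

lemma Rser_eq_sum (k : ℕ) : Rser k = ∑ l ∈ Finset.range k,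
    Xps ^ (k - 1 - l) * Yps ^ l *
      ((MvPowerSeries.C (σ := Fin 2) (R := ℝ)) (-8) * (Aps * Bps)⁻¹ * wx ^ (k - 1 - l) * wy ^ l) := by
  rw [Rser, Finset.mul_sum]
  apply Finset.sum_congr rfl
  intro l _
  rw [omegaX_eq, neg_omegaY_eq, mul_pow, mul_pow]
  show _ * ((Aps * Bps)⁻¹) * _ = _
  ring

lemma constCoeff_rest (a b : ℕ) :
    MvPowerSeries.constantCoeff (σ := Fin 2) (R := ℝ)
      ((MvPowerSeries.C (σ := Fin 2) (R := ℝ)) (-8) * (Aps * Bps)⁻¹ * wx ^ a * wy ^ b)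
      = -8 * (-2)^a * 2^b := by
  rw [map_mul, map_mul, map_mul, map_pow, map_pow]
  rw [MvPowerSeries.constantCoeff_inv, map_mul, constCoeff_A, constCoeff_B]
  unfold wx wy
  rw [map_mul, map_mul, MvPowerSeries.constantCoeff_inv, MvPowerSeries.constantCoeff_inv,
    constCoeff_A, constCoeff_B]
  simp

lemma rk_vanish {k i j : ℕ} (h : i + j + 1 < k) :
    MvPowerSeries.coeff (R := ℝ) (Mm i j) (Rser k) = 0 := by
  rw [Rser_eq_sum, map_sum]
  apply Finset.sum_eq_zero
  intro l hl
  rw [Finset.mem_range] at hl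
  exact coeff_shift_zero (by omega) _

lemma rk_diag (i j : ℕ) :
    MvPowerSeries.coeff (R := ℝ) (Mm i j) (Rser (i + j + 1)) = -8 * (-2)^i * 2^j := by
  rw [Rser_eq_sum, map_sum]
  rw [Finset.sum_eq_single_of_mem j (by simp [Finset.mem_range])]
  · have ha : i + j + 1 - 1 - j = i := by omega
    rw [ha]
    have := coeff_shift i j 0 0 ((MvPowerSeries.C (σ := Fin 2) (R := ℝ)) (-8) * (Aps * Bps)⁻¹ * wx ^ i * wy ^ j)
    rw [show i + 0 = i by omega, show j + 0 = j by omega] at this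
    rw [this, show Mm 0 0 = 0 by simp [Mm], MvPowerSeries.coeff_zero_eq_constantCoeff_apply,
      constCoeff_rest]
  · intro l hl hlj
    rw [Finset.mem_range] at hl
    exact coeff_shift_zero (by omega) _

lemma cX (I J : ℕ) (f : MvPowerSeries (Fin 2) ℝ) :
    MvPowerSeries.coeff (R := ℝ) (Mm (I+1) J) (Xps * f) = MvPowerSeries.coeff (R := ℝ) (Mm I J) f := by
  have := coeff_shift 1 0 I J f
  rw [pow_one, pow_zero, mul_one, show 1 + I = I + 1 by omega, show 0 + J = J by omega] at this
  exact this

lemma cY (I J : ℕ) (f : MvPowerSeries (Fin 2) ℝ) :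
    MvPowerSeries.coeff (R := ℝ) (Mm I (J+1)) (Yps * f) = MvPowerSeries.coeff (R := ℝ) (Mm I J) f := by
  have := coeff_shift 0 1 I J f
  rw [pow_one, pow_zero, one_mul, show 0 + I = I by omega, show 1 + J = J + 1 by omega] at this
  exact this

lemma cXY (I J : ℕ) (f : MvPowerSeries (Fin 2) ℝ) :
    MvPowerSeries.coeff (R := ℝ) (Mm (I+1) (J+1)) (Xps * Yps * f) =
      MvPowerSeries.coeff (R := ℝ) (Mm I J) f := by
  have := coeff_shift 1 1 I J f
  rw [pow_one, pow_one, show 1 + I = I + 1 by omega, show 1 + J = J + 1 by omega] at this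
  exact this

lemma cXXY (I J : ℕ) (f : MvPowerSeries (Fin 2) ℝ) :
    MvPowerSeries.coeff (R := ℝ) (Mm (I+1) (J+1)) (Xps^2 * Yps * f) =
      if I = 0 then 0 else MvPowerSeries.coeff (R := ℝ) (Mm (I-1) J) f := by
  cases I with
  | zero =>
    rw [if_pos rfl]
    have := coeff_shift_zero (a := 2) (b := 1) (i := 1) (j := J+1) (by omega) f
    rw [pow_one] at this
    exact this
  | succ m =>
    rw [if_neg (by omega)]
    have := coeff_shift 2 1 m J f
    rw [pow_one, show 2 + m = m + 1 + 1 by omega, show 1 + J = J + 1 by omega] at this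
    rw [Nat.add_sub_cancel]
    exact this

lemma cXYY (I J : ℕ) (f : MvPowerSeries (Fin 2) ℝ) :
    MvPowerSeries.coeff (R := ℝ) (Mm (I+1) (J+1)) (Xps * Yps^2 * f) =
      if J = 0 then 0 else MvPowerSeries.coeff (R := ℝ) (Mm I (J-1)) f := by
  cases J with
  | zero =>
    rw [if_pos rfl]
    have := coeff_shift_zero (a := 1) (b := 2) (i := I+1) (j := 1) (by omega) f
    rw [pow_one] at this
    exact this
  | succ m =>
    rw [if_neg (by omega)]
    have := coeff_shift 1 2 I m f
    rw [pow_one, show 1 + I = I + 1 by omega, show 2 + m = m + 1 + 1 by omega] at this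
    rw [Nat.add_sub_cancel]
    exact this

lemma coeff_K_mul (I J : ℕ) (f : MvPowerSeries (Fin 2) ℝ) :
    MvPowerSeries.coeff (R := ℝ) (Mm (I+1) (J+1)) (swKernel * f) =
      (1/4) * MvPowerSeries.coeff (R := ℝ) (Mm I (J+1)) f
      + (1/4) * MvPowerSeries.coeff (R := ℝ) (Mm (I+1) J) f
      + (1/4) * (if I = 0 then 0 else MvPowerSeries.coeff (R := ℝ) (Mm (I-1) J) f)
      + (1/4) * (if J = 0 then 0 else MvPowerSeries.coeff (R := ℝ) (Mm I (J-1)) f)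
      - MvPowerSeries.coeff (R := ℝ) (Mm I J) f := by
  have hc4 : (MvPowerSeries.C (σ := Fin 2) (R := ℝ)) (1/4) * (4 : MvPowerSeries (Fin 2) ℝ) = 1 := by
    rw [show (4 : MvPowerSeries (Fin 2) ℝ) = (MvPowerSeries.C (σ := Fin 2) (R := ℝ)) 4 from
      (map_ofNat _ 4).symm, ← map_mul]
    norm_num
  have hexp : swKernel * f =
      (MvPowerSeries.C (σ := Fin 2) (R := ℝ)) (1/4) * (Xps * f)
      + (MvPowerSeries.C (σ := Fin 2) (R := ℝ)) (1/4) * (Yps * f)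
      + (MvPowerSeries.C (σ := Fin 2) (R := ℝ)) (1/4) * (Xps^2 * Yps * f)
      + (MvPowerSeries.C (σ := Fin 2) (R := ℝ)) (1/4) * (Xps * Yps^2 * f)
      - Xps * Yps * f := by
    unfold swKernel
    linear_combination (-(Xps * Yps * f)) * hc4
  rw [hexp, map_sub, map_add, map_add, map_add,
    MvPowerSeries.coeff_C_mul, MvPowerSeries.coeff_C_mul,
    MvPowerSeries.coeff_C_mul, MvPowerSeries.coeff_C_mul,
    cX, cY, cXXY, cXYY, cXY]

lemma coeff_rhs_zero (k I J : ℕ) :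
    MvPowerSeries.coeff (R := ℝ) (Mm (I+1) (J+1)) (omegaX ^ k - (-omegaY) ^ k) = 0 := by
  have hx : noVar 1 (omegaX ^ k) := by
    apply noVar.pow
    apply noVar.mul
    apply noVar.mul (noVar.C 1 _)
    · exact noVar.X (by decide)
    · exact (((noVar.one 1).sub (noVar.X (by decide))).pow 2).inv
  have hy : noVar 0 ((-omegaY) ^ k) := by
    apply noVar.pow
    apply noVar.neg
    apply noVar.mul
    apply noVar.mul (noVar.C 0 _)
    · exact noVar.X (by decide)
    · exact (((noVar.one 0).sub (noVar.X (by decide))).pow 2).inv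
  rw [map_sub, hx _ (by rw [Mm_apply1]; omega), hy _ (by rw [Mm_apply0]; omega), sub_zero]

/-- harmonicity on coefficients -/
lemma harm_coeff (k I J : ℕ) (hk : 1 ≤ k) :
    (1/4) * MvPowerSeries.coeff (R := ℝ) (Mm I (J+1)) (Rser k)
      + (1/4) * MvPowerSeries.coeff (R := ℝ) (Mm (I+1) J) (Rser k)
      + (1/4) * (if I = 0 then 0 else MvPowerSeries.coeff (R := ℝ) (Mm (I-1) J) (Rser k))
      + (1/4) * (if J = 0 then 0 else MvPowerSeries.coeff (R := ℝ) (Mm I (J-1)) (Rser k))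
      - MvPowerSeries.coeff (R := ℝ) (Mm I J) (Rser k) = 0 := by
  rw [← coeff_K_mul, part0 k hk, coeff_rhs_zero]

lemma hser_nat (k i j : ℕ) :
    hser k (i : ℤ) (j : ℤ) = MvPowerSeries.coeff (R := ℝ) (Mm i j) (Rser k) := by
  rw [hser, if_pos ⟨Int.natCast_nonneg i, Int.natCast_nonneg j⟩]
  simp [Mm]

lemma hser_bc (k : ℕ) {i j : ℤ} (h : i < 0 ∨ j < 0) : hser k i j = 0 := by
  rw [hser, if_neg (by omega)]

lemma hser_vanish (k : ℕ) {i j : ℤ} (hi : 0 ≤ i) (hj : 0 ≤ j) (h : i + j + 1 < (k:ℤ)) :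
    hser k i j = 0 := by
  obtain ⟨I, rfl⟩ := Int.eq_ofNat_of_zero_le hi
  obtain ⟨J, rfl⟩ := Int.eq_ofNat_of_zero_le hj
  rw [hser_nat]
  exact rk_vanish (by exact_mod_cast h)

lemma hser_diag (I J : ℕ) :
    hser (I + J + 1) (I : ℤ) (J : ℤ) = -8 * (-2)^I * 2^J := by
  rw [hser_nat, rk_diag]

lemma swLap_hser (k : ℕ) (hk : 1 ≤ k) : swLap (hser k) = 0 := by
  funext i j
  rw [swLap]
  split_ifs with hij
  · obtain ⟨hi, hj⟩ := hij
    obtain ⟨I, rfl⟩ := Int.eq_ofNat_of_zero_le hi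
    obtain ⟨J, rfl⟩ := Int.eq_ofNat_of_zero_le hj
    have e1 : hser k ((I:ℤ) + 1) J = MvPowerSeries.coeff (R := ℝ) (Mm (I+1) J) (Rser k) := by
      rw [show ((I:ℤ) + 1) = ((I+1 : ℕ) : ℤ) by push_cast; ring, hser_nat]
    have e2 : hser k (I:ℤ) ((J:ℤ) + 1) = MvPowerSeries.coeff (R := ℝ) (Mm I (J+1)) (Rser k) := by
      rw [show ((J:ℤ) + 1) = ((J+1 : ℕ) : ℤ) by push_cast; ring, hser_nat]
    have e3 : hser k ((I:ℤ) - 1) J =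
        (if I = 0 then 0 else MvPowerSeries.coeff (R := ℝ) (Mm (I-1) J) (Rser k)) := by
      cases I with
      | zero => rw [if_pos rfl]; exact hser_bc k (by omega)
      | succ m =>
        rw [if_neg (by omega), show ((m+1:ℕ):ℤ) - 1 = ((m:ℕ):ℤ) by push_cast; ring,
          hser_nat, Nat.add_sub_cancel]
    have e4 : hser k (I:ℤ) ((J:ℤ) - 1) =
        (if J = 0 then 0 else MvPowerSeries.coeff (R := ℝ) (Mm I (J-1)) (Rser k)) := by
      cases J with
      | zero => rw [if_pos rfl]; exact hser_bc k (by omega)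
      | succ m =>
        rw [if_neg (by omega), show ((m+1:ℕ):ℤ) - 1 = ((m:ℕ):ℤ) by push_cast; ring,
          hser_nat, Nat.add_sub_cancel]
    rw [e1, e2, e3, e4, hser_nat]
    have := harm_coeff k I J hk
    show (_ + _ + _ + _) / 4 - _ = (0 : ℝ)
    linarith [this]
  · rfl

/-- recursively defined expansion coefficients -/
noncomputable def swCoeffs (h : ℤ → ℤ → ℝ) : ℕ → ℝ
  | n => (h n 0 - ∑ k ∈ (Finset.range n).attach,
      swCoeffs h k * hser (k + 1) (n : ℤ) 0) / (-8 * (-2) ^ n)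
  decreasing_by exact Finset.mem_range.mp k.2

lemma swCoeffs_eq (h : ℤ → ℤ → ℝ) (n : ℕ) :
    swCoeffs h n = (h n 0 - ∑ k ∈ Finset.range n,
      swCoeffs h k * hser (k + 1) (n : ℤ) 0) / (-8 * (-2) ^ n) := by
  rw [swCoeffs, ← Finset.sum_attach (Finset.range n) (fun k => swCoeffs h k * hser (k + 1) (n : ℤ) 0)]

/-- alternation on the lowest nonvanishing level -/
lemma alt_level (g : ℤ → ℤ → ℝ)
    (hbc : ∀ i j : ℤ, i < 0 ∨ j < 0 → g i j = 0)
    (hrel : ∀ i j : ℤ, 0 ≤ i → 0 ≤ j →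
      (g (i+1) j + g (i-1) j + g i (j+1) + g i (j-1)) / 4 - g i j = 0)
    (n : ℕ) (hv : ∀ i j : ℤ, 0 ≤ i → 0 ≤ j → i + j < (n:ℤ) → g i j = 0) :
    ∀ d : ℕ, d ≤ n → g ((n:ℤ) - d) d = (-1)^d * g n 0 := by
  intro d
  induction d with
  | zero => intro _; simp
  | succ d ih =>
    intro hdn
    have ihv := ih (by omega)
    have hrel' := hrel ((n:ℤ) - d - 1) d (by omega) (by omega)
    have h0 : g ((n:ℤ) - d - 1) d = 0 := hv _ _ (by omega) (by omega) (by omega)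
    have h1 : g ((n:ℤ) - d - 1 - 1) d = 0 := by
      rcases (by omega : (n:ℤ) - d - 1 - 1 < 0 ∨ 0 ≤ (n:ℤ) - d - 1 - 1) with hc | hc
      · exact hbc _ _ (Or.inl hc)
      · exact hv _ _ hc (by omega) (by omega)
    have h2 : g ((n:ℤ) - d - 1) ((d:ℤ) - 1) = 0 := by
      rcases (by omega : (d:ℤ) - 1 < 0 ∨ 0 ≤ (d:ℤ) - 1) with hc | hc
      · exact hbc _ _ (Or.inr hc)
      · exact hv _ _ (by omega) hc (by omega)
    have h3 : g ((n:ℤ) - d - 1 + 1) d = (-1)^d * g n 0 := by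
      rw [show (n:ℤ) - d - 1 + 1 = (n:ℤ) - d by ring]; exact ihv
    have goal_eq : g ((n:ℤ) - (d+1:ℕ)) ((d+1:ℕ):ℤ) = g ((n:ℤ) - d - 1) ((d:ℤ) + 1) := by
      norm_num; ring_nf
    rw [goal_eq, pow_succ]
    rw [h0, h1, h2, h3] at hrel'
    linarith [hrel']

lemma main_expand (h : ℤ → ℤ → ℝ) (hbc : ∀ i j : ℤ, i < 0 ∨ j < 0 → h i j = 0)
    (hlap : swLap h = 0) :
    ∀ n : ℕ, ∀ i j : ℤ, 0 ≤ i → 0 ≤ j → i + j < (n:ℤ) →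
      h i j = ∑ k ∈ Finset.range n, swCoeffs h k * hser (k+1) i j := by
  have hrelh : ∀ p q : ℤ, 0 ≤ p → 0 ≤ q →
      (h (p+1) q + h (p-1) q + h p (q+1) + h p (q-1))/4 - h p q = 0 := by
    intro p q hp hq
    have := congrFun (congrFun hlap p) q
    simpa [swLap, hp, hq] using this
  have hrelk : ∀ (k : ℕ) (p q : ℤ), 0 ≤ p → 0 ≤ q →
      (hser (k+1) (p+1) q + hser (k+1) (p-1) q + hser (k+1) p (q+1) + hser (k+1) p (q-1))/4
        - hser (k+1) p q = 0 := by
    intro k p q hp hq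
    have := congrFun (congrFun (swLap_hser (k+1) (by omega)) p) q
    simpa [swLap, hp, hq] using this
  intro n
  induction n with
  | zero => intro i j hi hj hlt; norm_num at hlt; omega
  | succ n ih =>
    intro i j hi hj hlt
    rw [Finset.sum_range_succ]
    rcases lt_or_ge (i+j) (n:ℤ) with hc | hc
    · rw [← ih i j hi hj hc, hser_vanish (n+1) hi hj (by push_cast; omega), mul_zero, add_zero]
    · have hn : i + j = (n:ℤ) := by push_cast at hlt ⊢; omega
      set g : ℤ → ℤ → ℝ :=
        fun p q => h p q - ∑ k ∈ Finset.range n, swCoeffs h k * hser (k+1) p q with hg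
      have gbc : ∀ p q : ℤ, p < 0 ∨ q < 0 → g p q = 0 := by
        intro p q hpq
        simp only [hg]
        rw [hbc p q hpq, Finset.sum_eq_zero, sub_zero]
        intro k _
        rw [hser_bc _ hpq, mul_zero]
      have gv : ∀ p q : ℤ, 0 ≤ p → 0 ≤ q → p + q < (n:ℤ) → g p q = 0 := by
        intro p q hp hq hpq
        simp only [hg]
        rw [← ih p q hp hq hpq, sub_self]
      have grel : ∀ p q : ℤ, 0 ≤ p → 0 ≤ q →
          (g (p+1) q + g (p-1) q + g p (q+1) + g p (q-1))/4 - g p q = 0 := by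
        intro p q hp hq
        have Hh := hrelh p q hp hq
        have Hsum : ∑ k ∈ Finset.range n, swCoeffs h k * hser (k+1) (p+1) q
            + ∑ k ∈ Finset.range n, swCoeffs h k * hser (k+1) (p-1) q
            + ∑ k ∈ Finset.range n, swCoeffs h k * hser (k+1) p (q+1)
            + ∑ k ∈ Finset.range n, swCoeffs h k * hser (k+1) p (q-1)
            = 4 * ∑ k ∈ Finset.range n, swCoeffs h k * hser (k+1) p q := by
          rw [← Finset.sum_add_distrib, ← Finset.sum_add_distrib, ← Finset.sum_add_distrib,
            Finset.mul_sum]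
          apply Finset.sum_congr rfl
          intro k _
          linear_combination (4 * swCoeffs h k) * (hrelk k p q hp hq)
        simp only [hg]
        linarith [Hh, Hsum]
      obtain ⟨J, hJ⟩ := Int.eq_ofNat_of_zero_le hj
      have hJn : J ≤ n := by omega
      have halt := alt_level g gbc grel n gv J hJn
      have hgn0 : g (n:ℤ) 0 = swCoeffs h n * (-8*(-2)^n) := by
        simp only [hg]
        rw [swCoeffs_eq, div_mul_cancel₀]
        exact mul_ne_zero (by norm_num) (pow_ne_zero _ (by norm_num))
      have hI : i = ((n - J : ℕ) : ℤ) := by push_cast; omega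
      have hdiag : hser (n+1) i j = -8 * (-2)^(n-J) * 2^J := by
        rw [hI, hJ, show n+1 = (n-J) + J + 1 by omega, hser_diag]
      have hgij : g i j = (-1)^J * g (n:ℤ) 0 := by
        have hi_eq : i = (n:ℤ) - (J:ℤ) := by omega
        rw [hi_eq, hJ]
        exact halt
      have hp2 : (-1:ℝ)^J * (-2)^n = (-2)^(n-J) * 2^J := by
        obtain ⟨m, rfl⟩ : ∃ m, n = m + J := ⟨n - J, by omega⟩
        rw [Nat.add_sub_cancel, pow_add,
          show ((-1:ℝ))^J*((-2:ℝ)^m*(-2)^J) = (-2:ℝ)^m*((-1)*(-2):ℝ)^J by rw [mul_pow]; ring]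
        norm_num
      have key : g i j = swCoeffs h n * hser (n+1) i j := by
        rw [hgij, hgn0, hdiag]
        linear_combination (-8 * swCoeffs h n) * hp2
      simp only [hg] at key
      linarith [key]


/-- For the simple walk: (0) `K·R_k = ω(x)^k − (−ω(y))^k`; (1) each `h_k` is discrete
harmonic; (2) `h_k(i,j) = 0` whenever `k > i + j + 1`; and (3) every discrete harmonic
function with Dirichlet boundary conditions is `Σ_{k≥1} a_k h_k` for a uniquely determined
real sequence `(a_k)_{k≥1}`. -/
theorem simple_walk_all_harmonic_functions :
    (∀ k : ℕ, 1 ≤ k → swKernel * Rser k = omegaX ^ k - (-omegaY) ^ k) ∧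
    (∀ k : ℕ, 1 ≤ k → swLap (hser k) = 0) ∧
    (∀ k : ℕ, ∀ i j : ℤ, 0 ≤ i → 0 ≤ j → i + j + 1 < (k : ℤ) → hser k i j = 0) ∧
    (∀ h : ℤ → ℤ → ℝ, (∀ i j : ℤ, i < 0 ∨ j < 0 → h i j = 0) → swLap h = 0 →
      ∃! a : ℕ → ℝ, ∀ i j : ℤ, h i j = ∑' k : ℕ, a k * hser (k + 1) i j) := by
  refine ⟨part0, swLap_hser, fun k i j hi hj hlt => hser_vanish k hi hj hlt, ?_⟩
  intro h hbc hlap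
  have hfin : ∀ (c : ℕ → ℝ) (i j : ℤ), 0 ≤ i → 0 ≤ j →
      ∀ k ∉ Finset.range ((i+j).toNat + 1), c k * hser (k+1) i j = 0 := by
    intro c i j hi hj k hk
    rw [Finset.mem_range, not_lt] at hk
    rw [hser_vanish (k+1) hi hj (by push_cast; omega), mul_zero]
  have hPa : ∀ i j : ℤ, h i j = ∑' k : ℕ, swCoeffs h k * hser (k + 1) i j := by
    intro i j
    by_cases hij : 0 ≤ i ∧ 0 ≤ j
    · obtain ⟨hi, hj⟩ := hij
      rw [tsum_eq_sum (hfin (swCoeffs h) i j hi hj)]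
      exact main_expand h hbc hlap ((i+j).toNat + 1) i j hi hj (by push_cast; omega)
    · rw [hbc i j (by omega)]
      have hz : ∀ k : ℕ, swCoeffs h k * hser (k+1) i j = 0 := fun k => by
        rw [hser_bc _ (by omega), mul_zero]
      rw [tsum_congr hz, tsum_zero]
  refine ⟨swCoeffs h, hPa, ?_⟩
  intro b hb
  have hne : ∀ n : ℕ, hser (n+1) (n:ℤ) 0 ≠ 0 := by
    intro n
    have := hser_diag n 0
    rw [show n + 0 + 1 = n + 1 by omega, Nat.cast_zero] at this
    rw [this]
    simp only [pow_zero, mul_one]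
    exact mul_ne_zero (by norm_num) (pow_ne_zero _ (by norm_num))
  suffices H : ∀ n, b n = swCoeffs h n from funext H
  intro n
  induction n using Nat.strong_induction_on with
  | _ n ih =>
  have hr : ((n:ℤ) + 0).toNat + 1 = n + 1 := by omega
  have e1 := hb (n:ℤ) 0
  have hfb : ∀ k ∉ Finset.range (n+1), b k * hser (k+1) (n:ℤ) 0 = 0 := by
    have := hfin b (n:ℤ) 0 (by omega) le_rfl; rwa [hr] at this
  have hfa : ∀ k ∉ Finset.range (n+1), swCoeffs h k * hser (k+1) (n:ℤ) 0 = 0 := by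
    have := hfin (swCoeffs h) (n:ℤ) 0 (by omega) le_rfl; rwa [hr] at this
  rw [tsum_eq_sum hfb] at e1
  have e2 := hPa (n:ℤ) 0
  rw [tsum_eq_sum hfa] at e2
  have e3 : ∑ k ∈ Finset.range (n+1), b k * hser (k+1) (n:ℤ) 0
      = ∑ k ∈ Finset.range (n+1), swCoeffs h k * hser (k+1) (n:ℤ) 0 := e1.symm.trans e2
  rw [Finset.sum_range_succ, Finset.sum_range_succ] at e3
  have e4 : ∑ k ∈ Finset.range n, b k * hser (k+1) (n:ℤ) 0
      = ∑ k ∈ Finset.range n, swCoeffs h k * hser (k+1) (n:ℤ) 0 :=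
    Finset.sum_congr rfl fun k hk => by rw [ih k (Finset.mem_range.mp hk)]
  have e5 : b n * hser (n+1) (n:ℤ) 0 = swCoeffs h n * hser (n+1) (n:ℤ) 0 := by linarith
  exact mul_right_cancel₀ (hne n) e5
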